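/- Let 0 < l_1, 0 < l_2, l_1 + l_2 < 1 and fix y_1, y_2 ∈ ℝ. Define v_a = (1 + y_1/(√a l_1))^{l_1} (1 + y_2/(√a l_2))^{l_2} (1 - (y_1+y_2)/(√a (1-l_1-l_2)))^{1-l_1-l_2}. Then lim_{a→∞} a·ln(v_a) = -[l_2(1-l_2)y_1² + 2 l_1 l_2 y_1 y_2 + l_1(1-l_1)y_2²] / (2 l_1 l_2 (1-l_1-l_2)). -/

import Mathlib

open Filter Real

private lemma sqrt_tendsto_atTop : Tendsto Real.sqrt atTop atTop := by
  have := tendsto_rpow_atTop (by norm_num : (0:ℝ) < 1/2)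
  refine this.congr' ?_
  filter_upwards [eventually_ge_atTop (0:ℝ)] with a ha
  rw [Real.sqrt_eq_rpow]

/-- Key second-order expansion: `a log(1 + c/√a) - √a c → -c²/2`. -/
private lemma key_limit (c : ℝ) :
    Tendsto (fun a : ℝ => a * Real.log (1 + c / Real.sqrt a) - Real.sqrt a * c)
      atTop (nhds (-(c ^ 2) / 2)) := by
  have h0 : Tendsto (fun a : ℝ =>
      a * Real.log (1 + c / Real.sqrt a) - Real.sqrt a * c - (-(c ^ 2) / 2))
      atTop (nhds 0) := by
    have hg : Tendsto (fun a : ℝ => 2 * |c| ^ 3 / Real.sqrt a) atTop (nhds 0) :=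
      tendsto_const_nhds.div_atTop sqrt_tendsto_atTop
    refine squeeze_zero_norm' ?_ hg
    filter_upwards [eventually_ge_atTop (1 : ℝ),
        sqrt_tendsto_atTop.eventually_ge_atTop (2 * |c| + 1)] with a ha1 ha2
    have ha0 : 0 < a := lt_of_lt_of_le one_pos ha1
    have hsa : 0 < Real.sqrt a := Real.sqrt_pos.2 ha0
    set x : ℝ := -c / Real.sqrt a with hxdef
    have hx : |x| ≤ 1 / 2 := by
      rw [hxdef, abs_div, abs_neg, abs_of_pos hsa, div_le_div_iff₀ hsa two_pos]
      nlinarith [abs_nonneg c]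
    have hbound := Real.abs_log_sub_add_sum_range_le (by linarith : |x| < 1) 2
    have hsum : ∑ i ∈ Finset.range 2, x ^ (i + 1) / ((i : ℝ) + 1) = x + x ^ 2 / 2 := by
      simp [Finset.sum_range_succ]
      ring
    rw [hsum] at hbound
    have h1x : (1 : ℝ) - x = 1 + c / Real.sqrt a := by
      rw [hxdef]; ring
    rw [h1x] at hbound
    have hbound2 : |x + x ^ 2 / 2 + Real.log (1 + c / Real.sqrt a)| ≤ 2 * |x| ^ 3 := by
      calc |x + x ^ 2 / 2 + Real.log (1 + c / Real.sqrt a)|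
          ≤ |x| ^ (2 + 1) / (1 - |x|) := hbound
        _ ≤ 2 * |x| ^ 3 := by
            rw [div_le_iff₀ (by linarith : (0:ℝ) < 1 - |x|)]
            have h3 : (0:ℝ) ≤ |x| ^ 3 := by positivity
            have h4 : (0:ℝ) ≤ |x| ^ 3 * (1 - 2 * |x|) := by nlinarith
            have h5 : |x| ^ (2 + 1) = |x| ^ 3 := by norm_num
            rw [h5]
            nlinarith
    -- Multiply by a
    have hsq : Real.sqrt a * Real.sqrt a = a := Real.mul_self_sqrt ha0.le
    have heq : a * Real.log (1 + c / Real.sqrt a) - Real.sqrt a * c - (-(c ^ 2) / 2)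
        = a * (x + x ^ 2 / 2 + Real.log (1 + c / Real.sqrt a)) := by
      have hx1 : a * x = -(Real.sqrt a * c) := by
        have h5 : a * (-c / Real.sqrt a) = -(a / Real.sqrt a * c) := by ring
        rw [hxdef, h5, Real.div_sqrt]
      have hx2 : a * x ^ 2 = c ^ 2 := by
        have h5 : (-c / Real.sqrt a) ^ 2 = c ^ 2 / a := by
          rw [div_pow, Real.sq_sqrt ha0.le]
          ring
        rw [hxdef, h5, mul_div_cancel₀ _ ha0.ne']
      linear_combination (-1 : ℝ) * hx1 - (1/2 : ℝ) * hx2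
    rw [heq]
    rw [norm_mul, Real.norm_eq_abs, Real.norm_eq_abs, abs_of_pos ha0]
    calc a * |x + x ^ 2 / 2 + Real.log (1 + c / Real.sqrt a)|
        ≤ a * (2 * |x| ^ 3) := by
          exact mul_le_mul_of_nonneg_left hbound2 ha0.le
      _ = 2 * |c| ^ 3 / Real.sqrt a := by
          have hs3 : Real.sqrt a ^ 3 = a * Real.sqrt a := by
            rw [pow_succ, Real.sq_sqrt ha0.le]
          rw [hxdef, abs_div, abs_neg, abs_of_pos hsa, div_pow, hs3]
          field_simp
  have := h0.add (tendsto_const_nhds (x := -(c ^ 2) / 2))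
  simpa using this

/-- The key exponent computation: `a · ln v_a` converges to the negative quadratic form. -/
theorem dirichlet_exponent_limit (l₁ l₂ : ℝ) (hl₁ : 0 < l₁) (hl₂ : 0 < l₂)
    (hl : l₁ + l₂ < 1) (y₁ y₂ : ℝ) :
    Tendsto (fun a : ℝ =>
        a * Real.log ((1 + y₁ / (Real.sqrt a * l₁)) ^ l₁ *
          (1 + y₂ / (Real.sqrt a * l₂)) ^ l₂ *
          (1 - (y₁ + y₂) / (Real.sqrt a * (1 - l₁ - l₂))) ^ (1 - l₁ - l₂)))
      atTop
      (nhds (-(l₂ * (1 - l₂) * y₁ ^ 2 + 2 * l₁ * l₂ * y₁ * y₂ + l₁ * (1 - l₁) * y₂ ^ 2) /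
        (2 * l₁ * l₂ * (1 - l₁ - l₂)))) := by
  set l₃ : ℝ := 1 - l₁ - l₂ with hl₃def
  have hl₃ : 0 < l₃ := by simp only [hl₃def]; linarith
  set d₁ : ℝ := y₁ / l₁ with hd₁
  set d₂ : ℝ := y₂ / l₂ with hd₂
  set d₃ : ℝ := -(y₁ + y₂) / l₃ with hd₃
  have hcomb : Tendsto (fun a : ℝ =>
      l₁ * (a * Real.log (1 + d₁ / Real.sqrt a) - Real.sqrt a * d₁) +
      l₂ * (a * Real.log (1 + d₂ / Real.sqrt a) - Real.sqrt a * d₂) +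
      l₃ * (a * Real.log (1 + d₃ / Real.sqrt a) - Real.sqrt a * d₃)) atTop
      (nhds (l₁ * (-(d₁ ^ 2) / 2) + l₂ * (-(d₂ ^ 2) / 2) + l₃ * (-(d₃ ^ 2) / 2))) :=
    (((key_limit d₁).const_mul l₁).add ((key_limit d₂).const_mul l₂)).add
      ((key_limit d₃).const_mul l₃)
  have hval : l₁ * (-(d₁ ^ 2) / 2) + l₂ * (-(d₂ ^ 2) / 2) + l₃ * (-(d₃ ^ 2) / 2)
      = -(l₂ * (1 - l₂) * y₁ ^ 2 + 2 * l₁ * l₂ * y₁ * y₂ + l₁ * (1 - l₁) * y₂ ^ 2) /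
        (2 * l₁ * l₂ * (1 - l₁ - l₂)) := by
    rw [hd₁, hd₂, hd₃, ← hl₃def]
    field_simp
    ring
  rw [← hval]
  refine hcomb.congr' ?_
  filter_upwards [eventually_gt_atTop (0 : ℝ),
    sqrt_tendsto_atTop.eventually_ge_atTop (1 + |d₁| + |d₂| + |d₃|)] with a ha0 hsa
  have hsp : 0 < Real.sqrt a := Real.sqrt_pos.2 ha0
  have habs : ∀ d : ℝ, |d| ≤ |d₁| + |d₂| + |d₃| → 0 < 1 + d / Real.sqrt a := by
    intro d hd
    have h1 : |d / Real.sqrt a| < 1 := by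
      rw [abs_div, abs_of_pos hsp, div_lt_one hsp]
      calc |d| ≤ |d₁| + |d₂| + |d₃| := hd
        _ < Real.sqrt a := by linarith
    have := neg_lt_of_abs_lt h1
    linarith
  have h1 : 0 < 1 + d₁ / Real.sqrt a :=
    habs d₁ (by nlinarith [abs_nonneg d₂, abs_nonneg d₃])
  have h2 : 0 < 1 + d₂ / Real.sqrt a :=
    habs d₂ (by nlinarith [abs_nonneg d₁, abs_nonneg d₃])
  have h3 : 0 < 1 + d₃ / Real.sqrt a :=
    habs d₃ (by nlinarith [abs_nonneg d₁, abs_nonneg d₂])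
  have e1 : 1 + y₁ / (Real.sqrt a * l₁) = 1 + d₁ / Real.sqrt a := by
    rw [hd₁, div_mul_eq_div_div_swap]
  have e2 : 1 + y₂ / (Real.sqrt a * l₂) = 1 + d₂ / Real.sqrt a := by
    rw [hd₂, div_mul_eq_div_div_swap]
  have e3 : 1 - (y₁ + y₂) / (Real.sqrt a * l₃) = 1 + d₃ / Real.sqrt a := by
    rw [hd₃, neg_div, neg_div, sub_eq_add_neg, div_mul_eq_div_div_swap]
  simp only [← hl₃def, e1, e2, e3]
  have hlog : Real.log ((1 + d₁ / Real.sqrt a) ^ l₁ * (1 + d₂ / Real.sqrt a) ^ l₂ *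
      (1 + d₃ / Real.sqrt a) ^ l₃)
      = l₁ * Real.log (1 + d₁ / Real.sqrt a) + l₂ * Real.log (1 + d₂ / Real.sqrt a) +
        l₃ * Real.log (1 + d₃ / Real.sqrt a) := by
    rw [Real.log_mul (by positivity) (by positivity),
      Real.log_mul (by positivity) (by positivity),
      Real.log_rpow h1, Real.log_rpow h2, Real.log_rpow h3]
  rw [hlog]
  have hzero : l₁ * d₁ + l₂ * d₂ + l₃ * d₃ = 0 := by
    rw [hd₁, hd₂, hd₃]
    field_simp
    ring
  linear_combination (-Real.sqrt a) * hzero
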